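/- Fix i ∈ ℤ and n ≥ 2. Let x₁,…,xₙ and y₁,…,yₙ be configurations with x_k ⪯ y_k for every k ∈ {1,…,n}. Then for every integer l ≥ i, Dⁿ_{i,0}(x₁,…,xₙ)[i,l] ≤ Dⁿ_{i,0}(y₁,…,yₙ)[i,l]; that is, the map (x₁,…,xₙ) ↦ Dⁿ_{i,0}(x₁,…,xₙ)[i,l] is nondecreasing in each of its arguments. -/

import Mathlib

open scoped BigOperators

/-- A particle configuration on `ℤ`: a `{0,1}`-valued function. -/
abbrev Config := ℤ → ℤ

/-- `x` takes only the values `0` and `1`. -/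
def IsConfig (x : Config) : Prop := ∀ i, x i = 0 ∨ x i = 1

/-- `x[i,j] = ∑_{k=i}^j x(k)` (zero if `j < i`). -/
noncomputable def cnt (x : Config) (i j : ℤ) : ℤ := ∑ k ∈ Finset.Icc i j, x k

/-- `(a,s)` has finite queue lengths. -/
def FinQ (a s : Config) : Prop :=
  ∀ i : ℤ, BddAbove {v : ℤ | ∃ j ≤ i, v = cnt a j i - cnt s j i}

/-- The queue length `Q_i(a,s) = sup_{j ≤ i} max(a[j,i] - s[j,i], 0)`. -/
noncomputable def queue (a s : Config) (i : ℤ) : ℤ :=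
  sSup {q : ℤ | ∃ j ≤ i, q = max (cnt a j i - cnt s j i) 0}

/-- The departure configuration `D(a,s)`. -/
noncomputable def dep (a s : Config) : Config := fun i =>
  if s i = 1 ∧ (0 < queue a s (i - 1) ∨ a i = 1) then 1 else 0

/-- The unused-service configuration `U(a,s)`. -/
noncomputable def unusedSrv (a s : Config) : Config := fun i =>
  if s i = 1 ∧ queue a s (i - 1) = 0 ∧ a i = 0 then 1 else 0

/-- `R(a,s)(i) = a(i) + U(a,s)(i)`. -/
noncomputable def Rmap (a s : Config) : Config := fun i => a i + unusedSrv a s i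

/-- Truncation: `x_{n,0}(i) = x(i)` for `i ≥ n`, `0` otherwise. -/
def trunc (x : Config) (n : ℤ) : Config := fun i => if n ≤ i then x i else 0

/-- Left-peeling tandem queue: `Dtandem x [s₁,…,s_k] = D(…D(D(x,s₁),s₂)…,s_k)`. -/
noncomputable def Dtandem : Config → List Config → Config
  | x, [] => x
  | x, s :: rest => Dtandem (dep x s) rest

/-- `DtandemList [x₁,…,xₙ] = Dⁿ(x₁,…,xₙ)`. -/
noncomputable def DtandemList : List Config → Config
  | [] => fun _ => 0
  | x :: rest => Dtandem x rest

/-- `DtandemN x = Dⁿ(x 0, …, x (n-1))`. -/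
noncomputable def DtandemN {n : ℕ} (x : Fin n → Config) : Config :=
  DtandemList (List.ofFn x)

/-- Every pair appearing as (arrivals, services) in the recursive definition of the
tandem departure map has finite queue lengths. -/
def TandemFinQ : List Config → Prop
  | [] => True
  | [_] => True
  | x :: s :: rest => FinQ x s ∧ TandemFinQ (dep x s :: rest)
  termination_by l => l.length

/-- zero before i -/
def ZB (i : ℤ) (x : Config) : Prop := ∀ m, m < i → x m = 0

lemma cnt_empty (x : Config) {i l : ℤ} (h : l < i) : cnt x i l = 0 := by
  unfold cnt
  rw [Finset.Icc_eq_empty (by omega)]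
  simp

lemma cnt_split (x : Config) {i j l : ℤ} (h1 : i ≤ j) (h2 : j ≤ l + 1) :
    cnt x i l = cnt x i (j - 1) + cnt x j l := by
  unfold cnt
  have hu : Finset.Icc i l = Finset.Icc i (j - 1) ∪ Finset.Icc j l := by
    ext k; simp only [Finset.mem_Icc, Finset.mem_union]; omega
  rw [hu, Finset.sum_union]
  rw [Finset.disjoint_left]
  intro k hk hk'
  simp only [Finset.mem_Icc] at hk hk'
  omega

lemma cnt_succ_top (x : Config) {i l : ℤ} (h : i ≤ l) :
    cnt x i l = cnt x i (l - 1) + x l := by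
  rw [cnt_split x h (by omega)]
  congr 1
  unfold cnt
  rw [Finset.Icc_self, Finset.sum_singleton]

lemma cnt_shift_left {i : ℤ} {a : Config} (ha : ZB i a) {j l : ℤ} (hj : j ≤ i) :
    cnt a j l = cnt a i l := by
  unfold cnt
  rw [Finset.sum_subset (Finset.Icc_subset_Icc_left hj)]
  intro k hk hk'
  simp only [Finset.mem_Icc] at hk hk'
  exact ha k (by omega)

lemma cnt_nonneg {x : Config} (hx : IsConfig x) (i l : ℤ) : 0 ≤ cnt x i l :=
  Finset.sum_nonneg fun k _ => by rcases hx k with h | h <;> omega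

lemma cnt_mono_of_le {x y : Config} (h : ∀ m, x m ≤ y m) (i l : ℤ) :
    cnt x i l ≤ cnt y i l :=
  Finset.sum_le_sum fun k _ => h k

section Queue

variable {i : ℤ} {a s : Config} (ha : ZB i a) (hs : ZB i s)

include ha hs

lemma queue_set_eq {l : ℤ} (hil : i ≤ l) :
    {q : ℤ | ∃ j ≤ l, q = max (cnt a j l - cnt s j l) 0}
      = ↑((Finset.Icc i l).image fun j => max (cnt a j l - cnt s j l) 0) := by
  ext q
  simp only [Set.mem_setOf_eq, Finset.coe_image, Set.mem_image, Finset.mem_coe,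
    Finset.mem_Icc]
  constructor
  · rintro ⟨j, hj, rfl⟩
    rcases le_or_gt i j with h | h
    · exact ⟨j, ⟨h, hj⟩, rfl⟩
    · refine ⟨i, ⟨le_refl i, hil⟩, ?_⟩
      rw [cnt_shift_left ha (le_of_lt h), cnt_shift_left hs (le_of_lt h)]
  · rintro ⟨j, ⟨_, hj⟩, rfl⟩
    exact ⟨j, hj, rfl⟩

lemma queue_eq_max' {l : ℤ} (hil : i ≤ l) :
    queue a s l = ((Finset.Icc i l).image fun j => max (cnt a j l - cnt s j l) 0).max'
      (Finset.Nonempty.image ⟨i, Finset.mem_Icc.2 ⟨le_refl i, hil⟩⟩ _) := by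
  rw [queue, queue_set_eq ha hs hil, Finset.Nonempty.csSup_eq_max']

lemma queue_le {l : ℤ} (hil : i ≤ l) {j : ℤ} (h1 : i ≤ j) (h2 : j ≤ l) :
    max (cnt a j l - cnt s j l) 0 ≤ queue a s l := by
  rw [queue_eq_max' ha hs hil]
  apply Finset.le_max'
  exact Finset.mem_image_of_mem _ (Finset.mem_Icc.2 ⟨h1, h2⟩)

lemma queue_exists {l : ℤ} (hil : i ≤ l) :
    ∃ j, i ≤ j ∧ j ≤ l ∧ queue a s l = max (cnt a j l - cnt s j l) 0 := by
  rw [queue_eq_max' ha hs hil]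
  have := Finset.max'_mem ((Finset.Icc i l).image fun j => max (cnt a j l - cnt s j l) 0)
    (Finset.Nonempty.image ⟨i, Finset.mem_Icc.2 ⟨le_refl i, hil⟩⟩ _)
  rw [Finset.mem_image] at this
  obtain ⟨j, hj, hval⟩ := this
  rw [Finset.mem_Icc] at hj
  exact ⟨j, hj.1, hj.2, hval.symm⟩

lemma queue_before {l : ℤ} (hil : l < i) : queue a s l = 0 := by
  have hset : {q : ℤ | ∃ j ≤ l, q = max (cnt a j l - cnt s j l) 0} = {0} := by
    ext q
    simp only [Set.mem_setOf_eq, Set.mem_singleton_iff]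
    constructor
    · rintro ⟨j, hj, rfl⟩
      have h1 : cnt a j l = 0 :=
        Finset.sum_eq_zero fun k hk => ha k (by simp only [Finset.mem_Icc] at hk; omega)
      have h2 : cnt s j l = 0 :=
        Finset.sum_eq_zero fun k hk => hs k (by simp only [Finset.mem_Icc] at hk; omega)
      rw [h1, h2]; omega
    · rintro rfl
      refine ⟨l, le_refl l, ?_⟩
      have h1 : cnt a l l = 0 := by
        unfold cnt; rw [Finset.Icc_self, Finset.sum_singleton]; exact ha l hil
      have h2 : cnt s l l = 0 := by
        unfold cnt; rw [Finset.Icc_self, Finset.sum_singleton]; exact hs l hil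
      rw [h1, h2]; omega
  rw [queue, hset, csSup_singleton]

lemma queue_nonneg (l : ℤ) : 0 ≤ queue a s l := by
  rcases lt_or_ge l i with h | h
  · rw [queue_before ha hs h]
  · obtain ⟨j, _, _, hv⟩ := queue_exists ha hs h
    rw [hv]; omega

lemma queue_rec {l : ℤ} (hil : i ≤ l) :
    queue a s l = max (queue a s (l - 1) + a l - s l) 0 := by
  have hq0 : 0 ≤ queue a s (l - 1) := queue_nonneg ha hs _
  apply le_antisymm
  · obtain ⟨j, hj1, hj2, hv⟩ := queue_exists ha hs hil
    rw [hv]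
    rcases eq_or_lt_of_le hj2 with heq | hjl
    · -- j = l
      subst heq
      have h1 : cnt a j j = a j := by unfold cnt; rw [Finset.Icc_self, Finset.sum_singleton]
      have h2 : cnt s j j = s j := by unfold cnt; rw [Finset.Icc_self, Finset.sum_singleton]
      rw [h1, h2]; omega
    · -- j ≤ l - 1
      have h1 : cnt a j l = cnt a j (l - 1) + a l := cnt_succ_top a (by omega)
      have h2 : cnt s j l = cnt s j (l - 1) + s l := cnt_succ_top s (by omega)
      have h3 : max (cnt a j (l - 1) - cnt s j (l - 1)) 0 ≤ queue a s (l - 1) :=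
        queue_le ha hs (by omega) hj1 (by omega)
      rw [h1, h2]; omega
  · have h0 : (0 : ℤ) ≤ queue a s l := queue_nonneg ha hs _
    have hl : queue a s (l - 1) + a l - s l ≤ queue a s l := by
      rcases lt_or_ge (l - 1) i with h | h
      · rw [queue_before ha hs h]
        have h1 : cnt a l l = a l := by unfold cnt; rw [Finset.Icc_self, Finset.sum_singleton]
        have h2 : cnt s l l = s l := by unfold cnt; rw [Finset.Icc_self, Finset.sum_singleton]
        have := queue_le ha hs hil hil (le_refl l) |>.trans_eq' (by rw [h1, h2])
        -- need: 0 + a l - s l ≤ queue l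
        have h3 : max (a l - s l) 0 ≤ queue a s l := by
          have := queue_le ha hs hil hil (le_refl l)
          rwa [h1, h2] at this
        omega
      · obtain ⟨j, hj1, hj2, hv⟩ := queue_exists ha hs h
        have h1 : cnt a j l = cnt a j (l - 1) + a l := cnt_succ_top a (by omega)
        have h2 : cnt s j l = cnt s j (l - 1) + s l := cnt_succ_top s (by omega)
        have h3 : max (cnt a j l - cnt s j l) 0 ≤ queue a s l :=
          queue_le ha hs hil hj1 (by omega)
        have h4 : max (a l - s l) 0 ≤ queue a s l := by
          have := queue_le ha hs hil hil (le_refl l)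
          have e1 : cnt a l l = a l := by unfold cnt; rw [Finset.Icc_self, Finset.sum_singleton]
          have e2 : cnt s l l = s l := by unfold cnt; rw [Finset.Icc_self, Finset.sum_singleton]
          rwa [e1, e2] at this
        rw [hv]
        omega
    omega

end Queue

lemma dep_isConfig (a s : Config) : IsConfig (dep a s) := by
  intro m; unfold dep; split <;> simp

lemma dep_zb {i : ℤ} {a s : Config} (hs : ZB i s) : ZB i (dep a s) := by
  intro m hm
  unfold dep
  rw [if_neg]
  rintro ⟨h1, -⟩
  rw [hs m hm] at h1
  omega

/-- Conservation: departures = arrivals − queue, for truncated binary configs. -/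
lemma dep_cnt_eq {i : ℤ} {a s : Config} (hac : IsConfig a) (hsc : IsConfig s)
    (ha : ZB i a) (hs : ZB i s) :
    ∀ l : ℤ, i - 1 ≤ l → cnt (dep a s) i l = cnt a i l - queue a s l := by
  refine Int.le_induction ?_ ?_
  · rw [cnt_empty _ (by omega), cnt_empty _ (by omega), queue_before ha hs (by omega)]
    omega
  · intro l hl ih
    have hil : i ≤ l + 1 := by omega
    have hsub : l + 1 - 1 = l := by ring
    rw [cnt_succ_top (dep a s) hil, cnt_succ_top a hil, queue_rec ha hs hil, hsub, ih]
    have hq0 : 0 ≤ queue a s l := queue_nonneg ha hs _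
    have hdep : dep a s (l + 1)
        = if s (l + 1) = 1 ∧ (0 < queue a s l ∨ a (l + 1) = 1) then 1 else 0 := by
      unfold dep; rw [hsub]
    rcases hsc (l + 1) with h1 | h1
    · have hd : dep a s (l + 1) = 0 := by
        rw [hdep, if_neg]; rintro ⟨c1, -⟩; omega
      rcases hac (l + 1) with h2 | h2 <;> rw [hd, h1, h2] <;> omega
    · rcases hac (l + 1) with h2 | h2
      · rcases eq_or_lt_of_le hq0 with h3 | h3
        · have hd : dep a s (l + 1) = 0 := by
            rw [hdep, if_neg]; rintro ⟨-, h4 | h4⟩ <;> omega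
          rw [hd, h1, h2]; omega
        · have hd : dep a s (l + 1) = 1 := by rw [hdep, if_pos ⟨h1, Or.inl h3⟩]
          rw [hd, h1, h2]; omega
      · have hd : dep a s (l + 1) = 1 := by rw [hdep, if_pos ⟨h1, Or.inr h2⟩]
        rw [hd, h1, h2]; omega

/-- Core monotonicity of the departure counting map. -/
lemma dep_cnt_mono {i : ℤ} {a s a' s' : Config}
    (hac : IsConfig a) (hsc : IsConfig s) (hac' : IsConfig a') (hsc' : IsConfig s')
    (ha : ZB i a) (hs : ZB i s) (ha' : ZB i a') (hs' : ZB i s')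
    (hmono : ∀ l : ℤ, cnt a i l ≤ cnt a' i l) (hsmono : ∀ m, s m ≤ s' m) :
    ∀ l : ℤ, cnt (dep a s) i l ≤ cnt (dep a' s') i l := by
  intro l
  rcases lt_or_ge l i with h | h
  · rw [cnt_empty _ h, cnt_empty _ h]
  · rw [dep_cnt_eq hac hsc ha hs l (by omega), dep_cnt_eq hac' hsc' ha' hs' l (by omega)]
    obtain ⟨j, hj1, hj2, hv⟩ := queue_exists ha' hs' h
    have hsplit : cnt a' i l = cnt a' i (j - 1) + cnt a' j l := cnt_split a' hj1 (by omega)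
    have hsplit2 : cnt a i l = cnt a i (j - 1) + cnt a j l := cnt_split a hj1 (by omega)
    have hqle : max (cnt a j l - cnt s j l) 0 ≤ queue a s l := queue_le ha hs h hj1 hj2
    have h1 : cnt a i (j - 1) ≤ cnt a' i (j - 1) := hmono _
    have h2 : cnt s j l ≤ cnt s' j l := cnt_mono_of_le hsmono _ _
    have h3 : cnt a i l ≤ cnt a' i l := hmono _
    have hq0' : 0 ≤ queue a s l := queue_nonneg ha hs _
    omega


lemma tandem_mono (i : ℤ) {ss ss' : List Config}
    (hrel : List.Forall₂
      (fun s s' => (IsConfig s ∧ ZB i s) ∧ (IsConfig s' ∧ ZB i s') ∧ ∀ m, s m ≤ s' m)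
      ss ss') :
    ∀ a a' : Config, IsConfig a → ZB i a → IsConfig a' → ZB i a' →
      (∀ l, cnt a i l ≤ cnt a' i l) →
      ∀ l, cnt (Dtandem a ss) i l ≤ cnt (Dtandem a' ss') i l := by
  induction hrel with
  | nil => intro a a' _ _ _ _ h l; exact h l
  | cons hh _ ih =>
    intro a a' hac haz hac' haz' h l
    obtain ⟨⟨hsc, hsz⟩, ⟨hsc', hsz'⟩, hle⟩ := hh
    simp only [Dtandem]
    exact ih (dep a _) (dep a' _) (dep_isConfig _ _) (dep_zb hsz) (dep_isConfig _ _)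
      (dep_zb hsz') (dep_cnt_mono hac hsc hac' hsc' haz hsz haz' hsz' h hle) l

lemma trunc_isConfig {x : Config} (hx : IsConfig x) (i : ℤ) : IsConfig (trunc x i) := by
  intro m; unfold trunc; split
  · exact hx m
  · left; rfl

lemma trunc_zb (x : Config) (i : ℤ) : ZB i (trunc x i) := by
  intro m hm; unfold trunc; rw [if_neg (by omega)]

lemma trunc_le {x y : Config} (h : ∀ m, x m ≤ y m) (i : ℤ) :
    ∀ m, trunc x i m ≤ trunc y i m := by
  intro m; unfold trunc; split
  · exact h m
  · exact le_refl 0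

/-- The truncated tandem departure count
`(x₁,…,xₙ) ↦ Dⁿ_{i,0}(x₁,…,xₙ)[i,l]` is nondecreasing in each of its arguments. -/
theorem stmt5 (i : ℤ) (n : ℕ) (hn : 2 ≤ n) (x y : Fin n → Config)
    (hx : ∀ k, IsConfig (x k)) (hy : ∀ k, IsConfig (y k))
    (hxy : ∀ k, ∀ m : ℤ, x k m ≤ y k m) :
    ∀ l : ℤ, i ≤ l →
      cnt (DtandemN fun k => trunc (x k) i) i l
        ≤ cnt (DtandemN fun k => trunc (y k) i) i l := by
  obtain ⟨m, rfl⟩ : ∃ m, n = m + 1 := ⟨n - 1, by omega⟩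
  intro l _
  have hofx : (DtandemN fun k => trunc (x k) i)
      = Dtandem (trunc (x 0) i) (List.ofFn fun j : Fin m => trunc (x j.succ) i) := by
    rw [DtandemN, List.ofFn_succ, DtandemList]
  have hofy : (DtandemN fun k => trunc (y k) i)
      = Dtandem (trunc (y 0) i) (List.ofFn fun j : Fin m => trunc (y j.succ) i) := by
    rw [DtandemN, List.ofFn_succ, DtandemList]
  rw [hofx, hofy]
  have hrel : List.Forall₂
      (fun s s' => (IsConfig s ∧ ZB i s) ∧ (IsConfig s' ∧ ZB i s') ∧ ∀ m, s m ≤ s' m)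
      (List.ofFn fun j : Fin m => trunc (x j.succ) i)
      (List.ofFn fun j : Fin m => trunc (y j.succ) i) := by
    rw [List.forall₂_iff_get]
    refine ⟨by simp, ?_⟩
    intro j h₁ h₂
    rw [List.get_ofFn, List.get_ofFn]
    exact ⟨⟨trunc_isConfig (hx _) i, trunc_zb _ _⟩, ⟨trunc_isConfig (hy _) i, trunc_zb _ _⟩,
      trunc_le (hxy _) i⟩
  exact tandem_mono i hrel (trunc (x 0) i) (trunc (y 0) i) (trunc_isConfig (hx 0) i)
    (trunc_zb _ _) (trunc_isConfig (hy 0) i) (trunc_zb _ _)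
    (fun l => cnt_mono_of_le (trunc_le (hxy 0) i) i l) l
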